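/- Let A be an n×n matrix over a field, let A₀ be its invertible leading k×k submatrix, and let Ĉ be the (n-k)×(n-k) matrix of bordered determinants ĉ_{pq} (p,q = k+1,…,n) as in Sylvester's identity. Then det A = det Ĉ / (det A₀)^{n-k-1}. -/

import Mathlib

open Matrix

def bidx {n : ℕ} (k : ℕ) (hk : k ≤ n) (p : Fin n) (i : Fin (k + 1)) : Fin n :=
  if h : (i : ℕ) < k then ⟨i, lt_of_lt_of_le h hk⟩ else p

def cHat {R : Type*} [CommRing R] {n : ℕ} (A : Matrix (Fin n) (Fin n) R) (k : ℕ)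
    (hk : k ≤ n) (p q : Fin n) : R :=
  Matrix.det (Matrix.of fun i j : Fin (k + 1) => A (bidx k hk p i) (bidx k hk q j))

def cIdx {n k : ℕ} (hk : k ≤ n) (i : Fin (n - k)) : Fin n :=
  ⟨k + i, by have := i.isLt; omega⟩

section aux
variable {F : Type*} [Field F] {n k : ℕ}

lemma cHat_eq (hk : k ≤ n) (A : Matrix (Fin n) (Fin n) F)
    [inst : Invertible (A.submatrix (Fin.castLE hk) (Fin.castLE hk))] (p q : Fin n) :
    cHat A k hk p q = (A.submatrix (Fin.castLE hk) (Fin.castLE hk)).det *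
      (A p q - ∑ j, (∑ i, A p (Fin.castLE hk i) *
        (⅟(A.submatrix (Fin.castLE hk) (Fin.castLE hk))) i j) * A (Fin.castLE hk j) q) := by
  set A₀ := A.submatrix (Fin.castLE hk) (Fin.castLE hk) with hA₀
  have e : Fin k ⊕ Fin 1 ≃ Fin (k + 1) := finSumFinEquiv
  rw [cHat, ← det_submatrix_equiv_self finSumFinEquiv]
  have hsub : (Matrix.of fun i j : Fin (k + 1) => A (bidx k hk p i) (bidx k hk q j)).submatrix
      finSumFinEquiv finSumFinEquiv =
      fromBlocks A₀ (Matrix.of fun i (_ : Fin 1) => A (Fin.castLE hk i) q)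
        (Matrix.of fun (_ : Fin 1) j => A p (Fin.castLE hk j))
        (Matrix.of fun (_ _ : Fin 1) => A p q) := by
    ext (i | i) (j | j) <;>
      simp [fromBlocks, bidx, hA₀, Fin.castLE, Fin.ext_iff]
  rw [hsub, det_fromBlocks₁₁]
  congr 1
  rw [det_fin_one]
  simp [Matrix.sub_apply, Matrix.mul_apply]
  rfl

end aux

/-- Sylvester's identity over a field with invertible pivot block:
`det A = det Ĉ / (det A₀)^(n-k-1)`. -/
theorem sylvester_identity_field {F : Type*} [Field F] {n k : ℕ}
    (hk1 : 1 ≤ k) (hk : k ≤ n) (hkn : k ≤ n - 1) (A : Matrix (Fin n) (Fin n) F)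
    (h0 : IsUnit (Matrix.det (A.submatrix (Fin.castLE hk) (Fin.castLE hk)))) :
    A.det =
      Matrix.det (Matrix.of fun p q : Fin (n - k) =>
          cHat A k hk (cIdx hk p) (cIdx hk q)) /
        (Matrix.det (A.submatrix (Fin.castLE hk) (Fin.castLE hk))) ^ (n - k - 1) := by
  set A₀ := A.submatrix (Fin.castLE hk) (Fin.castLE hk) with hA₀
  haveI : Invertible A₀ := A₀.invertibleOfIsUnitDet h0
  set B := Matrix.of fun (i : Fin k) (q : Fin (n - k)) => A (Fin.castLE hk i) (cIdx hk q) with hB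
  set C := Matrix.of fun (p : Fin (n - k)) (i : Fin k) => A (cIdx hk p) (Fin.castLE hk i) with hC
  set D := Matrix.of fun (p q : Fin (n - k)) => A (cIdx hk p) (cIdx hk q) with hD
  set S := D - C * ⅟A₀ * B with hS
  -- det A = det A₀ * det S
  have hkn' : k + (n - k) = n := by omega
  have hdetA : A.det = A₀.det * S.det := by
    rw [← det_submatrix_equiv_self (finSumFinEquiv.trans (finCongr hkn')) A]
    have hsub : A.submatrix (finSumFinEquiv.trans (finCongr hkn'))
        (finSumFinEquiv.trans (finCongr hkn')) = fromBlocks A₀ B C D := by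
      ext (i | i) (j | j) <;>
        (simp [fromBlocks, hA₀, hB, hC, hD, cIdx]; congr 1 <;> simp [Fin.ext_iff])
    rw [hsub, det_fromBlocks₁₁]
  -- Ĉ = det A₀ • S
  have hChat : (Matrix.of fun p q : Fin (n - k) =>
      cHat A k hk (cIdx hk p) (cIdx hk q)) = A₀.det • S := by
    ext p q
    rw [Matrix.of_apply, cHat_eq hk A (cIdx hk p) (cIdx hk q)]
    simp only [Matrix.smul_apply, hS, Matrix.sub_apply, Matrix.mul_apply, smul_eq_mul,
      hB, hC, hD, Matrix.of_apply]
    rfl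
  rw [hChat, Matrix.det_smul, Fintype.card_fin]
  have h1 : 1 ≤ n - k := by omega
  have hd0 : A₀.det ≠ 0 := h0.ne_zero
  rw [hdetA]
  have hp : A₀.det ^ (n - k) = A₀.det ^ (n - k - 1) * A₀.det := by
    rw [← pow_succ]; congr 1; omega
  rw [hp]
  field_simp
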